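/- Let Ω be a Jordan domain, J ⊊ ∂Ω relatively open, and for n, m ∈ ℕ let E_{n,m} = {f ∈ A(Ω,J) : for all z₀ ∈ J_m there exists z ∈ (J_m ∖ {z₀}) ∩ D(z₀, 1/n) with |f(z) − f(z₀)|/|z − z₀| > n}, where J_m = J ∩ Δ_m and Δ_m = {z ∈ Ω ∪ J : dist(z, ∂Ω ∖ J) ≥ 1/m}. Then E_{n,m} is open in A(Ω,J). -/

import Mathlib

open Set Metric

/-- `Ω` is a Jordan domain: a bounded open connected set whose boundary is a
Jordan curve (a homeomorphic image of the unit circle). -/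
def IsJordanDomain (Ω : Set ℂ) : Prop :=
  IsOpen Ω ∧ IsConnected Ω ∧ Bornology.IsBounded Ω ∧
    ∃ φ : (Metric.sphere (0:ℂ) 1) → ℂ, Continuous φ ∧ Function.Injective φ ∧
      frontier Ω = Set.range φ

theorem stmt_18 (Ω J : Set ℂ) (hΩ : IsJordanDomain Ω)
    (hJsub : J ⊆ frontier Ω)
    (hJrelopen : ∃ U : Set ℂ, IsOpen U ∧ J = frontier Ω ∩ U)
    (hJproper : J ≠ frontier Ω)
    (Δ : ℕ → Set ℂ)
    (hΔ : ∀ m : ℕ, Δ m = {z ∈ Ω ∪ J | Metric.infDist z (frontier Ω \ J) ≥ 1 / (m : ℝ)})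
    (Jm : ℕ → Set ℂ) (hJm : ∀ m : ℕ, Jm m = J ∩ Δ m)
    (Econd : (ℂ → ℂ) → ℕ → ℕ → Prop)
    (hEcond : ∀ f n m, Econd f n m ↔
      ∀ z₀ ∈ Jm m, ∃ z ∈ (Jm m \ {z₀}) ∩ ball z₀ (1 / (n : ℝ)),
        ‖f z - f z₀‖ / ‖z - z₀‖ > (n : ℝ))
    (n m : ℕ) (hn : 1 ≤ n) (hm : 1 ≤ m)
    (f : ℂ → ℂ) (hf : ContinuousOn f (Ω ∪ J) ∧ DifferentiableOn ℂ f Ω)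
    (hfE : Econd f n m) :
    ∃ k : ℕ, 1 ≤ k ∧ ∃ ε > (0:ℝ), ∀ g : ℂ → ℂ,
      ContinuousOn g (Ω ∪ J) → DifferentiableOn ℂ g Ω →
      (∀ z ∈ Δ k, ‖g z - f z‖ < ε) → Econd g n m := by

  obtain ⟨hf_cont, hf_diff⟩ := hf
  have hm0 : (0:ℝ) < 1 / (m : ℝ) := by
    have : (0:ℝ) < (m:ℝ) := by exact_mod_cast hm
    positivity
  have hn0 : (0:ℝ) < (n : ℝ) := by exact_mod_cast hn
  have hKsubJ : Jm m ⊆ J := by rw [hJm]; exact inter_subset_left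
  have hKsubΔ : Jm m ⊆ Δ m := by rw [hJm]; exact inter_subset_right
  have hΔsub : Δ m ⊆ Ω ∪ J := by rw [hΔ]; exact fun z hz => hz.1
  have hcl : Ω ∪ J ⊆ closure Ω := by
    intro z hz
    rcases hz with h | h
    · exact subset_closure h
    · exact frontier_subset_closure (hJsub h)
  -- Jm m is closed
  have hKclosed : IsClosed (Jm m) := by
    apply isClosed_of_closure_subset
    intro z hz
    have hzfr : z ∈ frontier Ω := by
      have h1 : closure (Jm m) ⊆ closure J := closure_mono hKsubJ
      have h2 : closure J ⊆ frontier Ω := closure_minimal hJsub isClosed_frontier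
      exact h2 (h1 hz)
    have hinf : (1:ℝ) / m ≤ infDist z (frontier Ω \ J) := by
      have hsub : Jm m ⊆ {w : ℂ | 1 / (m:ℝ) ≤ infDist w (frontier Ω \ J)} := by
        intro w hw
        have := hKsubΔ hw
        rw [hΔ] at this
        exact this.2
      have hcls : IsClosed {w : ℂ | 1 / (m:ℝ) ≤ infDist w (frontier Ω \ J)} :=
        isClosed_le continuous_const (continuous_infDist_pt _)
      exact hcls.closure_subset_iff.mpr hsub hz
    have hzJ : z ∈ J := by
      by_contra h
      have : infDist z (frontier Ω \ J) = 0 := infDist_zero_of_mem ⟨hzfr, h⟩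
      rw [this] at hinf
      linarith
    rw [hJm]
    refine ⟨hzJ, ?_⟩
    rw [hΔ]
    exact ⟨Or.inr hzJ, hinf⟩
  have hKcompact : IsCompact (Jm m) := by
    apply Metric.isCompact_of_isClosed_isBounded hKclosed
    exact (hΩ.2.2.1.closure.subset (fun z hz => hcl (hΔsub (hKsubΔ hz))))
  -- key pointwise lemma
  have key : ∀ z₀ ∈ Jm m, ∃ r > (0:ℝ), ∃ ε > (0:ℝ), ∀ g : ℂ → ℂ,
      (∀ z ∈ Δ m, ‖g z - f z‖ < ε) → ∀ z₀' ∈ Jm m, dist z₀' z₀ < r →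
      ∃ z ∈ (Jm m \ {z₀'}) ∩ ball z₀' (1 / (n : ℝ)),
        ‖g z - g z₀'‖ / ‖z - z₀'‖ > (n : ℝ) := by
    intro z₀ hz₀
    obtain ⟨z, ⟨⟨hzK, hzne⟩, hzball⟩, hzgt⟩ := (hEcond f n m).mp hfE z₀ hz₀
    have hzne' : z ≠ z₀ := fun h => hzne (by simp [h])
    have hd : (0:ℝ) < ‖z - z₀‖ := by
      rw [norm_pos_iff]
      exact sub_ne_zero_of_ne hzne'
    set d := ‖z - z₀‖ with hd_def
    have hδpos : (0:ℝ) < ‖f z - f z₀‖ - n * d := by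
      have := (lt_div_iff₀ hd).mp hzgt
      linarith
    set δ := ‖f z - f z₀‖ - n * d with hδ_def
    have hdlt : d < 1 / (n : ℝ) := by
      have := mem_ball.mp hzball
      rwa [dist_eq_norm] at this
    -- continuity of f within Ω ∪ J at z₀
    have hz₀mem : z₀ ∈ Ω ∪ J := Or.inr (hKsubJ hz₀)
    obtain ⟨r₁, hr₁pos, hr₁⟩ := Metric.continuousWithinAt_iff.mp (hf_cont z₀ hz₀mem) (δ/8) (by linarith)
    refine ⟨min r₁ (min d (min (1/(n:ℝ) - d) (δ/(8*(n:ℝ))))), ?_, δ/4, by linarith, ?_⟩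
    · have : (0:ℝ) < δ/(8*(n:ℝ)) := by positivity
      simp only [lt_min_iff]
      exact ⟨hr₁pos, hd, by linarith, this⟩
    intro g hg z₀' hz₀'K hz₀'r
    simp only [lt_min_iff] at hz₀'r
    obtain ⟨he1, he2, he3, he4⟩ := hz₀'r
    have hz₀'mem : z₀' ∈ Ω ∪ J := Or.inr (hKsubJ hz₀'K)
    have hfz₀' : dist (f z₀') (f z₀) < δ/8 := hr₁ hz₀'mem he1
    have hdz : dist z z₀' > 0 := by
      have htri : dist z z₀ ≤ dist z z₀' + dist z₀' z₀ := dist_triangle z z₀' z₀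
      have : dist z z₀ = d := by rw [dist_eq_norm]
      linarith
    have hzne'' : z ≠ z₀' := by
      intro h
      rw [h, dist_self] at hdz
      exact lt_irrefl 0 hdz
    have hzball' : z ∈ ball z₀' (1 / (n:ℝ)) := by
      rw [mem_ball]
      have htri : dist z z₀' ≤ dist z z₀ + dist z₀ z₀' := dist_triangle z z₀ z₀'
      have h1 : dist z z₀ = d := by rw [dist_eq_norm]
      have h2 : dist z₀ z₀' = dist z₀' z₀ := dist_comm _ _
      linarith
    -- the estimate
    have hgz : dist (g z) (f z) < δ/4 := by rw [dist_eq_norm]; exact hg z (hKsubΔ hzK)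
    have hgz₀' : dist (g z₀') (f z₀') < δ/4 := by rw [dist_eq_norm]; exact hg z₀' (hKsubΔ hz₀'K)
    have htri4 : dist (f z) (f z₀) ≤ dist (f z) (g z) + dist (g z) (g z₀') + dist (g z₀') (f z₀) :=
      dist_triangle4 _ _ _ _
    have htri5 : dist (g z₀') (f z₀) ≤ dist (g z₀') (f z₀') + dist (f z₀') (f z₀) :=
      dist_triangle _ _ _
    have hcomm : dist (f z) (g z) = dist (g z) (f z) := dist_comm _ _
    have hfn : dist (f z) (f z₀) = n * d + δ := by rw [dist_eq_norm, hδ_def]; ring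
    have hA : dist (g z) (g z₀') > n * d + 3*δ/8 := by linarith
    have hB : (n:ℝ) * dist z z₀' < n * d + δ/8 := by
      have htri : dist z z₀' ≤ dist z z₀ + dist z₀ z₀' := dist_triangle z z₀ z₀'
      have h1 : dist z z₀ = d := by rw [dist_eq_norm]
      have h2 : dist z₀ z₀' = dist z₀' z₀ := dist_comm _ _
      have h3 : (n:ℝ) * dist z₀' z₀ < δ/8 := by
        have hlt := mul_lt_mul_of_pos_left he4 hn0
        have heq : (n:ℝ) * (δ/(8*(n:ℝ))) = δ/8 := by
          field_simp
        linarith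
      nlinarith [mul_le_mul_of_nonneg_left htri hn0.le]
    refine ⟨z, ⟨⟨hzK, hzne''⟩, hzball'⟩, ?_⟩
    rw [gt_iff_lt, lt_div_iff₀ (by rwa [← dist_eq_norm])]
    rw [← dist_eq_norm, ← dist_eq_norm]
    linarith
  -- extract data
  choose r hr ε hε H using key
  -- finite subcover
  rcases eq_empty_or_nonempty (Jm m) with hKe | hKne
  · refine ⟨m, hm, 1, one_pos, ?_⟩
    intro g _ _ _
    rw [hEcond]
    intro z₀ hz₀
    rw [hKe] at hz₀
    exact absurd hz₀ (notMem_empty z₀)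
  · obtain ⟨t, htcov⟩ := hKcompact.elim_nhds_subcover'
      (fun x hx => ball x (r x hx))
      (fun x hx => ball_mem_nhds x (hr x hx))
    have htne : t.Nonempty := by
      obtain ⟨x, hx⟩ := hKne
      have := htcov hx
      simp only [mem_iUnion] at this
      obtain ⟨i, hi, _⟩ := this
      exact ⟨i, hi⟩
    set ε₀ : ℝ := t.inf' htne (fun x => ε x x.2) with hε₀
    have hε₀pos : 0 < ε₀ := by
      rw [hε₀, Finset.lt_inf'_iff]
      intro b hb
      exact hε b b.2
    refine ⟨m, hm, ε₀, hε₀pos, ?_⟩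
    intro g _ _ hg
    rw [hEcond]
    intro z₀' hz₀'
    have := htcov hz₀'
    simp only [mem_iUnion] at this
    obtain ⟨i, hit, hiball⟩ := this
    have hεle : ε₀ ≤ ε i i.2 := by
      rw [hε₀]
      exact Finset.inf'_le (fun x => ε x.1 x.2) hit
    exact H i i.2 g (fun z hz => lt_of_lt_of_le (hg z hz) hεle) z₀' hz₀' (mem_ball.mp hiball)
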